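/- Let p : Bool × Bool → ℝ be a joint probability distribution of a pair (X, Y) of boolean random variables (p ≥ 0, summing to 1) such that X is uniform, i.e., p(false,false) + p(false,true) = 1/2, and such that Prob(X = Y) = p(false,false) + p(true,true) ≥ 1/2 + δ for some δ with 0 ≤ δ ≤ 1/2. Then the mutual information I(X:Y) = H₂(X) + H₂(Y) − H₂(X,Y) satisfies I(X:Y) ≥ 1 − H(1/2 + δ), where H₂ denotes base-2 Shannon entropy of the corresponding (marginal or joint) distribution. (Fano's inequality, simple boolean form.) -/

import Mathlib

open Matrix BigOperators Kronecker
open scoped ComplexOrder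

noncomputable section
open Classical

/-- The positive semidefinite square root of a matrix (junk value `0` if not PSD). -/
def msqrt {d : Type*} [Fintype d] [DecidableEq d] (A : Matrix d d ℂ) : Matrix d d ℂ :=
  if h : A.PosSemidef then
    (h.1.eigenvectorUnitary : Matrix d d ℂ) * diagonal ((↑) ∘ (Real.sqrt ·) ∘ h.1.eigenvalues) *
      (star (h.1.eigenvectorUnitary : Matrix d d ℂ)) else 0

/-- The trace norm `Tr √(AᴴA)` of a complex matrix. -/
def traceNorm {d : Type*} [Fintype d] [DecidableEq d] (A : Matrix d d ℂ) : ℝ :=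
  ((msqrt (Aᴴ * A)).trace).re

/-- `ρ` is a density matrix: positive semidefinite with trace `1`. -/
def IsDensityMatrix {d : Type*} [Fintype d] [DecidableEq d] (ρ : Matrix d d ℂ) : Prop :=
  ρ.PosSemidef ∧ ρ.trace = 1

/-- Von Neumann entropy, base 2 (junk value `0` if not Hermitian). -/
def vnEntropy {d : Type*} [Fintype d] [DecidableEq d] (ρ : Matrix d d ℂ) : ℝ :=
  if h : ρ.IsHermitian then -∑ i, (h.eigenvalues i) * Real.logb 2 (h.eigenvalues i) else 0

/-- The binary entropy function, base 2. -/
def binEntropy (p : ℝ) : ℝ := -p * Real.logb 2 p - (1 - p) * Real.logb 2 (1 - p)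

/-- Fidelity of two matrices: `(Tr √(√ρ₁ ρ₂ √ρ₁))²`. -/
def fidelity {d : Type*} [Fintype d] [DecidableEq d] (ρ₁ ρ₂ : Matrix d d ℂ) : ℝ :=
  (((msqrt (msqrt ρ₁ * ρ₂ * msqrt ρ₁)).trace).re) ^ 2

/-- Partial trace over the second tensor factor. -/
def ptraceSnd {m k : ℕ} (ρ : Matrix (Fin m × Fin k) (Fin m × Fin k) ℂ) :
    Matrix (Fin m) (Fin m) ℂ :=
  Matrix.of fun i j => ∑ l : Fin k, ρ (i, l) (j, l)

end

private lemma logsum_term (s x y : ℝ) (hx : 0 ≤ x) (hxy : x ≤ y) (hs : 0 < s) :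
    x * Real.log s + x - y * s ≤ x * Real.log x - x * Real.log y := by
  rcases eq_or_lt_of_le hx with h | h
  · subst h
    simp only [zero_mul, mul_zero, add_zero, zero_add, sub_zero, zero_sub, sub_self]
    nlinarith [mul_nonneg (le_trans (le_refl 0) hxy) hs.le]
  · have hy : 0 < y := lt_of_lt_of_le h hxy
    have hlog := Real.log_le_sub_one_of_pos (show 0 < y * s / x by positivity)
    rw [Real.log_div (by positivity) h.ne', Real.log_mul hy.ne' hs.ne'] at hlog
    have h4 : x * (y * s / x - 1) = y * s - x := by field_simp
    nlinarith [mul_le_mul_of_nonneg_left hlog h.le]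

private lemma logsum2 (x₁ x₂ y₁ y₂ : ℝ) (h1 : 0 ≤ x₁) (h2 : 0 ≤ x₂)
    (hy1 : x₁ ≤ y₁) (hy2 : x₂ ≤ y₂) (hy : y₁ + y₂ = 1) :
    (x₁ + x₂) * Real.log (x₁ + x₂) ≤
      x₁ * Real.log x₁ - x₁ * Real.log y₁ + (x₂ * Real.log x₂ - x₂ * Real.log y₂) := by
  rcases eq_or_lt_of_le (add_nonneg h1 h2) with h | hs
  · have hx1 : x₁ = 0 := by linarith
    have hx2 : x₂ = 0 := by linarith
    simp [hx1, hx2]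
  · have t1 := logsum_term (x₁ + x₂) x₁ y₁ h1 hy1 hs
    have t2 := logsum_term (x₁ + x₂) x₂ y₂ h2 hy2 hs
    nlinarith [t1, t2]

private lemma fano_log (a b c d δ : ℝ) (ha : 0 ≤ a) (hb : 0 ≤ b) (hc : 0 ≤ c) (hd : 0 ≤ d)
    (hab : a + b = 1/2) (hcd : c + d = 1/2)
    (hδ0 : 0 ≤ δ) (hδ : δ ≤ 1/2) (hcorr : 1/2 + δ ≤ a + d) :
    -((1/2 + δ) * Real.log (1/2 + δ)) - (1 - (1/2 + δ)) * Real.log (1 - (1/2 + δ)) ≥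
      (a + c) * Real.log (a + c) + (b + d) * Real.log (b + d)
        - (a * Real.log a + b * Real.log b + c * Real.log c + d * Real.log d) := by
  have hy : (a + c) + (b + d) = 1 := by linarith
  have h1 := logsum2 a d (a + c) (b + d) ha hd (by linarith) (by linarith) hy
  have h2 := logsum2 b c (b + d) (a + c) hb hc (by linarith) (by linarith) (by linarith)
  -- binEntropy facts
  have hbe : ∀ x : ℝ, Real.binEntropy x = -(x * Real.log x) - (1 - x) * Real.log (1 - x) := by
    intro x
    rw [Real.binEntropy, Real.log_inv, Real.log_inv]; ring
  have he0 : 0 ≤ b + c := by linarith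
  have he1 : b + c ≤ 1/2 - δ := by linarith
  have mono : Real.binEntropy (b + c) ≤ Real.binEntropy (1/2 - δ) := by
    apply Real.binEntropy_strictMonoOn.monotoneOn
    · exact ⟨he0, by norm_num; linarith⟩
    · exact ⟨by linarith, by norm_num; linarith⟩
    · exact he1
  simp only [hbe] at mono
  have had : (1:ℝ) - (b + c) = a + d := by linarith
  have h4 : (1:ℝ) - (1/2 - δ) = 1/2 + δ := by ring
  rw [had, h4] at mono
  have h3 : (1:ℝ) - (1/2 + δ) = 1/2 - δ := by ring
  rw [h3]
  linarith [h1, h2, mono]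

/-- **Fano's inequality** (simple boolean form): if `X` is a uniform boolean random
variable and `Prob(X = Y) ≥ 1/2 + δ`, then `I(X:Y) ≥ 1 - H(1/2 + δ)`. -/
theorem fano_boolean (p : Bool × Bool → ℝ) (δ : ℝ)
    (hp0 : ∀ ω, 0 ≤ p ω) (hp1 : ∑ ω, p ω = 1)
    (hX : p (false, false) + p (false, true) = 1 / 2)
    (hδ0 : 0 ≤ δ) (hδ : δ ≤ 1 / 2)
    (hcorr : p (false, false) + p (true, true) ≥ 1 / 2 + δ) :
    (∑ b : Bool, -((p (b, false) + p (b, true)) *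
        Real.logb 2 (p (b, false) + p (b, true)))) +
      (∑ b : Bool, -((p (false, b) + p (true, b)) *
        Real.logb 2 (p (false, b) + p (true, b)))) -
      (∑ ω : Bool × Bool, -(p ω * Real.logb 2 (p ω))) ≥
    1 - binEntropy (1 / 2 + δ) := by
  have ha := hp0 (false, false)
  have hb := hp0 (false, true)
  have hc := hp0 (true, false)
  have hd := hp0 (true, true)
  rw [Fintype.sum_prod_type] at hp1
  simp only [Fintype.sum_bool] at hp1
  simp only [Fintype.sum_prod_type, Fintype.sum_bool]
  have hcd : p (true, false) + p (true, true) = 1 / 2 := by linarith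
  have key := fano_log (p (false, false)) (p (false, true)) (p (true, false))
    (p (true, true)) δ ha hb hc hd hX hcd hδ0 hδ hcorr
  have hlog2 : (0:ℝ) < Real.log 2 := Real.log_pos one_lt_two
  rw [ge_iff_le, ← mul_le_mul_iff_left₀ hlog2]
  simp only [binEntropy, Real.logb]
  rw [hX, hcd]
  have hhalf : Real.log (1 / 2) = -Real.log 2 := by
    rw [show (1:ℝ)/2 = 2⁻¹ by norm_num, Real.log_inv]
  rw [hhalf]
  generalize Real.log (1 / 2 + δ) = A at key ⊢
  generalize Real.log (1 - (1 / 2 + δ)) = B at key ⊢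
  generalize Real.log (p (false, false)) = C at key ⊢
  generalize Real.log (p (false, true)) = D at key ⊢
  generalize Real.log (p (true, false)) = E at key ⊢
  generalize Real.log (p (true, true)) = F at key ⊢
  generalize Real.log (p (false, false) + p (true, false)) = G at key ⊢
  generalize Real.log (p (false, true) + p (true, true)) = H at key ⊢
  have hl2 : Real.log 2 ≠ 0 := hlog2.ne'
  field_simp
  have hcube : (0:ℝ) ≤ Real.log 2 * Real.log 2 * Real.log 2 := by positivity
  have hk := mul_le_mul_of_nonneg_right (key : _ ≤ _) hcube
  nlinarith [hk]
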